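/- Fix β₀ > 0 and a sequence of constants (K_k)_{k≥0}. Then there exist r̲₀ ≥ 2 and b > 0, depending only on β₀ and the constants (K_k), with the following property. Suppose u : ℝ² → ℝ is smooth, solves L_{1/2}u := Δu − (1/2)(⟨x, ∇u(x)⟩ − u(x)) = 0 on all of ℝ², and satisfies |∇^k u(x)| ≤ K_k (1 + |x|)^{1−k} for every k ≥ 0 and every x ∈ ℝ². If moreover ‖u‖_{C³(B_{r̲+2}(0))} ≤ b for some r̲ ≥ r̲₀, then there exist a continuous function c : S¹ → ℝ and a function f defined on {x ∈ ℝ² : |x| ≥ 1} such that u(x) = c(x/|x|)·|x| + f(x) for all |x| ≥ 1, and sup_{ω∈S¹} |c(ω)| + sup_{|x|≥1} |x|·|f(x)| ≤ β₀. -/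

import Mathlib

open Metric Real
open scoped ContDiff

local notation "E2" => EuclideanSpace ℝ (Fin 2)

noncomputable def ee (i : Fin 2) : EuclideanSpace ℝ (Fin 2) := EuclideanSpace.single i (1:ℝ)

lemma norm_ee (i : Fin 2) : ‖ee i‖ = 1 := by
  simp [ee, EuclideanSpace.norm_single]

section applyconst
variable {F : Type*} [NormedAddCommGroup F] [NormedSpace ℝ F]

lemma hasFDerivAt_applyconst {A : EuclideanSpace ℝ (Fin 2) → (EuclideanSpace ℝ (Fin 2) →L[ℝ] F)}
    {x : E2} (hA : DifferentiableAt ℝ A x) (b : E2) :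
    HasFDerivAt (fun y => A y b)
      ((ContinuousLinearMap.apply ℝ F b).comp (fderiv ℝ A x)) x :=
  (ContinuousLinearMap.apply ℝ F b).hasFDerivAt.comp x hA.hasFDerivAt

lemma fderiv_applyconst {A : EuclideanSpace ℝ (Fin 2) → (EuclideanSpace ℝ (Fin 2) →L[ℝ] F)}
    {x : E2} (hA : DifferentiableAt ℝ A x) (b a : E2) :
    fderiv ℝ (fun y => A y b) x a = fderiv ℝ A x a b := by
  rw [(hasFDerivAt_applyconst hA b).fderiv]; rfl
end applyconst

lemma maxprin (w : EuclideanSpace ℝ (Fin 2) → ℝ) (hw : ContDiff ℝ ∞ w) (C : ℝ)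
    (heq : ∀ x : E2, ∑ j : Fin 2, fderiv ℝ (fun y => fderiv ℝ w y (ee j)) x (ee j)
            = (1/2)*(fderiv ℝ w x x + w x))
    (hdec : ∀ x : E2, w x ≤ C * (1+‖x‖)⁻¹) : ∀ x : E2, w x ≤ 0 := by
  by_contra hcon
  push_neg at hcon
  obtain ⟨x₁, hx₁⟩ := hcon
  have hwd : Differentiable ℝ w := hw.differentiable (by decide)
  have hw1 : ContDiff ℝ ∞ (fderiv ℝ w) := hw.fderiv_right (by simp)
  have hw1d : Differentiable ℝ (fderiv ℝ w) := hw1.differentiable (by decide)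
  have hGsm : ∀ j : Fin 2, ContDiff ℝ ∞ (fun y => fderiv ℝ w y (ee j)) := fun j =>
    (ContinuousLinearMap.apply ℝ ℝ (ee j)).contDiff.comp hw1
  have hG : ∀ j : Fin 2, Differentiable ℝ (fun y => fderiv ℝ w y (ee j)) := fun j =>
    (hGsm j).differentiable (by decide)
  -- positivity of C
  have hx₁pos : (0:ℝ) < w x₁ := hx₁
  have hCpos : 0 < C := by
    have h := hdec x₁
    have h1 : (0:ℝ) < (1+‖x₁‖)⁻¹ := by positivity
    nlinarith
  set R : ℝ := max ‖x₁‖ (C / w x₁) with hR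
  obtain ⟨x₀, hx₀mem, hx₀max⟩ :=
    (isCompact_closedBall (0:E2) R).exists_isMaxOn
      ⟨x₁, by simp [mem_closedBall_zero_iff, hR, le_max_left]⟩
      (hw.continuous.continuousOn)
  have hx₀ge : w x₁ ≤ w x₀ := hx₀max (by simp [mem_closedBall_zero_iff, hR, le_max_left])
  have hglob : ∀ y : E2, w y ≤ w x₀ := by
    intro y
    by_cases hy : ‖y‖ ≤ R
    · exact hx₀max (mem_closedBall_zero_iff.mpr hy)
    · push_neg at hy
      have hy2 : C / w x₁ < ‖y‖ := lt_of_le_of_lt (le_max_right _ _) hy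
      have h3 : C < w x₁ * (1 + ‖y‖) := by
        rw [div_lt_iff₀ hx₁pos] at hy2
        nlinarith [norm_nonneg y]
      have h4 : C * (1+‖y‖)⁻¹ < w x₁ := by
        rw [mul_inv_lt_iff₀ (by positivity)]
        linarith [h3]
      exact le_trans (hdec y) (le_trans h4.le (le_trans hx₀ge (le_refl _)))
  have hgrad : fderiv ℝ w x₀ = 0 := by
    have : IsLocalMax w x₀ := Filter.Eventually.of_forall hglob
    exact this.fderiv_eq_zero
  -- second derivative test in each direction
  have hqle : ∀ j : Fin 2, fderiv ℝ (fun y => fderiv ℝ w y (ee j)) x₀ (ee j) ≤ 0 := by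
    intro j
    by_contra hq
    push_neg at hq
    set φ : ℝ → ℝ := fun t => w (x₀ + t • ee j) with hφdef
    set ψ : ℝ → ℝ := fun t => fderiv ℝ w (x₀ + t • ee j) (ee j) with hψdef
    set χ : ℝ → ℝ := fun t => fderiv ℝ (fun y => fderiv ℝ w y (ee j)) (x₀ + t • ee j) (ee j)
      with hχdef
    have hL : ∀ t : ℝ, HasDerivAt (fun t : ℝ => x₀ + t • ee j) (ee j) t := by
      intro t
      have := ((hasDerivAt_id t).smul_const (ee j)).const_add x₀
      simpa using this
    have hφ : ∀ t, HasDerivAt φ (ψ t) t := fun t =>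
      ((hwd _).hasFDerivAt.comp_hasDerivAt t (hL t))
    have hψ : ∀ t, HasDerivAt ψ (χ t) t := fun t =>
      (((hG j) _).hasFDerivAt.comp_hasDerivAt t (hL t))
    have hψ0 : ψ 0 = 0 := by simp [hψdef, hgrad]
    have hχ0 : 0 < χ 0 := by simpa [hχdef] using hq
    have hχcont : Continuous χ := by
      have h1 : Continuous (fun y : E2 => fderiv ℝ (fun y => fderiv ℝ w y (ee j)) y (ee j)) :=
        Continuous.clm_apply (((hGsm j).fderiv_right (by simp)).continuous (n := ∞)) continuous_const
      exact h1.comp ((continuous_const.add (continuous_id.smul continuous_const)))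
    obtain ⟨s, hsopen, hs0, hspos⟩ :
        ∃ s : Set ℝ, IsOpen s ∧ (0:ℝ) ∈ s ∧ ∀ t ∈ s, 0 < χ t := by
      refine ⟨{t | 0 < χ t}, isOpen_lt continuous_const hχcont, hχ0, fun t ht => ht⟩
    obtain ⟨δ, hδpos, hδsub⟩ := Metric.isOpen_iff.mp hsopen 0 hs0
    have hψpos : ∀ t ∈ Set.Ioo (0:ℝ) (δ/2), 0 < ψ t := by
      intro t ht
      have hmono : StrictMonoOn ψ (Set.Icc 0 (δ/2)) := by
        apply strictMonoOn_of_deriv_pos (convex_Icc _ _)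
        · exact Continuous.continuousOn
            (continuous_iff_continuousAt.mpr fun t => (hψ t).continuousAt)
        · intro t ht
          rw [interior_Icc] at ht
          rw [(hψ t).deriv]
          apply hspos
          apply hδsub
          simp only [Metric.mem_ball, Real.dist_eq, sub_zero]
          rw [abs_of_pos ht.1]
          linarith [ht.2, hδpos]
      have := hmono (Set.mem_Icc.mpr ⟨le_refl 0, by linarith [hδpos]⟩)
        (Set.mem_Icc.mpr ⟨ht.1.le, ht.2.le⟩) ht.1
      rw [hψ0] at this
      exact this
    have hφmono : StrictMonoOn φ (Set.Icc 0 (δ/2)) := by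
      apply strictMonoOn_of_deriv_pos (convex_Icc _ _)
      · exact Continuous.continuousOn (continuous_iff_continuousAt.mpr fun t => (hφ t).continuousAt)
      · intro t ht
        rw [interior_Icc] at ht
        rw [(hφ t).deriv]
        exact hψpos t ht
    have hlt : φ 0 < φ (δ/2) :=
      hφmono (Set.mem_Icc.mpr ⟨le_refl 0, by linarith⟩)
        (Set.mem_Icc.mpr ⟨by linarith, le_refl _⟩) (by linarith)
    have : φ (δ/2) ≤ φ 0 := by
      have := hglob (x₀ + (δ/2) • ee j)
      simpa [hφdef] using this
    linarith
  -- contradiction with heq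
  have h1 := heq x₀
  rw [hgrad] at h1
  simp only [ContinuousLinearMap.zero_apply, zero_add] at h1
  have h2 : (0:ℝ) < w x₀ := lt_of_lt_of_le hx₁pos hx₀ge
  have h3 : ∑ j : Fin 2, fderiv ℝ (fun y => fderiv ℝ w y (ee j)) x₀ (ee j) ≤ 0 :=
    Finset.sum_nonpos (fun j _ => hqle j)
  rw [h1] at h3
  linarith

lemma heq_v (u : EuclideanSpace ℝ (Fin 2) → ℝ) (hu : ContDiff ℝ ∞ u)
    (hpde' : ∀ x : E2, (∑ i : Fin 2, fderiv ℝ (fderiv ℝ u) x (ee i) (ee i))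
        = (1/2)*(fderiv ℝ u x x - u x)) :
    ∀ x : E2, ∑ j : Fin 2,
        fderiv ℝ (fun y => fderiv ℝ (fun z => (1/2)*(fderiv ℝ u z z - u z)) y (ee j)) x (ee j)
      = (1/2)*(fderiv ℝ (fun z => (1/2)*(fderiv ℝ u z z - u z)) x x
          + (1/2)*(fderiv ℝ u x x - u x)) := by
  have hud : Differentiable ℝ u := hu.differentiable (by decide)
  have hu1 : ContDiff ℝ ∞ (fderiv ℝ u) := hu.fderiv_right (by simp)
  have hu1d : Differentiable ℝ (fderiv ℝ u) := hu1.differentiable (by decide)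
  have hu2 : ContDiff ℝ ∞ (fderiv ℝ (fderiv ℝ u)) := hu1.fderiv_right (by simp)
  have hu2d : Differentiable ℝ (fderiv ℝ (fderiv ℝ u)) := hu2.differentiable (by decide)
  set g2 := fderiv ℝ (fderiv ℝ u) with hg2def
  set g3 := fderiv ℝ g2 with hg3def
  have hF : ∀ x : E2, DifferentiableAt ℝ (fun y => fderiv ℝ u y y) x := fun x =>
    (hu1d x).clm_apply differentiableAt_id
  have hFf : ∀ x a : E2, fderiv ℝ (fun y => fderiv ℝ u y y) x a
      = g2 x a x + fderiv ℝ u x a := by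
    intro x a
    have h : HasFDerivAt (fun y => fderiv ℝ u y y)
        ((fderiv ℝ u x).comp (ContinuousLinearMap.id ℝ (EuclideanSpace ℝ (Fin 2)))
          + (g2 x).flip x) x :=
      (hu1d x).hasFDerivAt.clm_apply (hasFDerivAt_id x)
    rw [h.fderiv]
    simp only [ContinuousLinearMap.add_apply, ContinuousLinearMap.comp_apply,
      ContinuousLinearMap.flip_apply, ContinuousLinearMap.coe_id', id_eq]
    ring
  have hfv : ∀ x a : E2, fderiv ℝ (fun z => (1/2)*(fderiv ℝ u z z - u z)) x a
      = (1/2) * (g2 x a x) := by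
    intro x a
    rw [fderiv_const_mul (show DifferentiableAt ℝ (fun z => fderiv ℝ u z z - u z) x from (hF x).sub (hud x))]
    rw [fderiv_fun_sub (hF x) (hud x)]
    simp only [ContinuousLinearMap.smul_apply, ContinuousLinearMap.sub_apply, smul_eq_mul]
    rw [hFf]
    ring
  have hsymm2 : ∀ x a b : E2, g2 x a b = g2 x b a := fun x =>
    hu.contDiffAt.isSymmSndFDerivAt (by simp only [minSmoothness_of_isRCLikeNormedField]; exact ENat.LEInfty.out)
  have hsymm12 : ∀ x a b : E2, g3 x a b = g3 x b a := fun x =>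
    hu1.contDiffAt.isSymmSndFDerivAt (by simp only [minSmoothness_of_isRCLikeNormedField]; exact ENat.LEInfty.out)
  have hCdiff : ∀ (b : E2), Differentiable ℝ (fun y => g2 y b) := fun b y =>
    (hasFDerivAt_applyconst (hu2d y) b).differentiableAt
  have hCf : ∀ (b x a : E2), fderiv ℝ (fun y => g2 y b) x a = g3 x a b := fun b x a =>
    fderiv_applyconst (hu2d x) b a
  have hDf : ∀ (b c x a : E2), fderiv ℝ (fun y => g2 y b c) x a = g3 x a b c := by
    intro b c x a
    have h1 : fderiv ℝ (fun y => g2 y b c) x a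
        = fderiv ℝ (fun y => g2 y b) x a c := fderiv_applyconst ((hCdiff b) x) c a
    rw [h1, hCf]
  have hsymm23 : ∀ x a b c : E2, g3 x a b c = g3 x a c b := by
    intro x a b c
    have hfun : (fun y => g2 y b c) = (fun y => g2 y c b) := funext fun y => hsymm2 y b c
    rw [← hDf b c x a, hfun, hDf c b x a]
  have hDdiff : ∀ (b c : E2), Differentiable ℝ (fun y => g2 y b c) := fun b c y =>
    (hasFDerivAt_applyconst ((hCdiff b) y) c).differentiableAt
  have hsum : ∀ x a : E2, ∑ j : Fin 2, g3 x a (ee j) (ee j) = (1/2) * (g2 x a x) := by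
    intro x a
    have hfun : (fun y => ∑ j : Fin 2, g2 y (ee j) (ee j))
        = (fun z => (1/2)*(fderiv ℝ u z z - u z)) := funext fun y => hpde' y
    have h1 : fderiv ℝ (fun y => ∑ j : Fin 2, g2 y (ee j) (ee j)) x
        = ∑ j : Fin 2, fderiv ℝ (fun y => g2 y (ee j) (ee j)) x :=
      fderiv_fun_sum (fun j _ => (hDdiff (ee j) (ee j)) x)
    have h2 : fderiv ℝ (fun y => ∑ j : Fin 2, g2 y (ee j) (ee j)) x a
        = ∑ j : Fin 2, g3 x a (ee j) (ee j) := by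
      rw [h1, ContinuousLinearMap.sum_apply]
      exact Finset.sum_congr rfl fun j _ => hDf (ee j) (ee j) x a
    rw [← h2, hfun, hfv]
  intro x
  have hterm : ∀ j : Fin 2,
      fderiv ℝ (fun y => fderiv ℝ (fun z => (1/2)*(fderiv ℝ u z z - u z)) y (ee j)) x (ee j)
      = (1/2) * (g3 x (ee j) (ee j) x + g2 x (ee j) (ee j)) := by
    intro j
    have hfun : (fun y => fderiv ℝ (fun z => (1/2)*(fderiv ℝ u z z - u z)) y (ee j))
        = (fun y => (1/2) * (g2 y (ee j) y)) := funext fun y => hfv y (ee j)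
    rw [hfun]
    have hG : DifferentiableAt ℝ (fun y => g2 y (ee j) y) x :=
      ((hCdiff (ee j)) x).clm_apply differentiableAt_id
    have hcl : HasFDerivAt (fun y => g2 y (ee j) y)
        ((g2 x (ee j)).comp (ContinuousLinearMap.id ℝ (EuclideanSpace ℝ (Fin 2)))
          + (fderiv ℝ (fun y => g2 y (ee j)) x).flip x) x :=
      ((hCdiff (ee j)) x).hasFDerivAt.clm_apply (hasFDerivAt_id x)
    rw [fderiv_const_mul hG]
    simp only [ContinuousLinearMap.smul_apply, smul_eq_mul]
    rw [hcl.fderiv]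
    simp only [ContinuousLinearMap.add_apply, ContinuousLinearMap.comp_apply,
      ContinuousLinearMap.flip_apply, ContinuousLinearMap.coe_id', id_eq]
    rw [hCf]
    ring
  have hsumeq : ∑ j : Fin 2,
      fderiv ℝ (fun y => fderiv ℝ (fun z => (1/2)*(fderiv ℝ u z z - u z)) y (ee j)) x (ee j)
      = ∑ j : Fin 2, (1/2) * (g3 x (ee j) (ee j) x + g2 x (ee j) (ee j)) :=
    Finset.sum_congr rfl fun j _ => hterm j
  have heach : ∀ j : Fin 2, g3 x (ee j) (ee j) x = g3 x x (ee j) (ee j) := by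
    intro j
    rw [hsymm23 x (ee j) (ee j) x, hsymm12 x (ee j) x]
  have hS3 : g3 x (ee 0) (ee 0) x + g3 x (ee 1) (ee 1) x = (1/2) * (g2 x x x) := by
    have := hsum x x
    rw [Fin.sum_univ_two] at this
    rw [heach 0, heach 1]
    exact this
  have hS2 : g2 x (ee 0) (ee 0) + g2 x (ee 1) (ee 1) = (1/2)*(fderiv ℝ u x x - u x) := by
    have := hpde' x
    rwa [Fin.sum_univ_two] at this
  rw [hsumeq, hfv x x, Fin.sum_univ_two]
  linarith

lemma homog (u : EuclideanSpace ℝ (Fin 2) → ℝ) (hu : ContDiff ℝ ∞ u)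
    (hid : ∀ x : E2, fderiv ℝ u x x = u x) :
    ∀ x : E2, 1 ≤ ‖x‖ → u x = u (‖x‖⁻¹ • x) * ‖x‖ := by
  have hud : Differentiable ℝ u := hu.differentiable (by decide)
  intro x hx
  have hxn : (0:ℝ) < ‖x‖ := lt_of_lt_of_le one_pos hx
  set om : E2 := ‖x‖⁻¹ • x with hom
  have hxw : ‖x‖ • om = x := by
    rw [hom, smul_smul, mul_inv_cancel₀ hxn.ne', one_smul]
  rcases eq_or_lt_of_le hx with h1 | h1
  · have homx : om = x := by rw [hom, ← h1, inv_one, one_smul]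
    rw [homx, ← h1, mul_one]
  · set s : ℝ → ℝ := fun t => t⁻¹ * u (t • om) with hs
    have hder : ∀ t : ℝ, t ≠ 0 → HasDerivAt s 0 t := by
      intro t ht
      have hL : HasDerivAt (fun t : ℝ => t • om) om t := by
        simpa using (hasDerivAt_id t).smul_const om
      have hr : HasDerivAt (fun t : ℝ => u (t • om)) (fderiv ℝ u (t • om) om) t :=
        (hud _).hasFDerivAt.comp_hasDerivAt t hL
      have h := (hasDerivAt_inv ht).fun_mul hr
      refine h.congr_deriv ?_
      have h2 : fderiv ℝ u (t • om) (t • om) = u (t • om) := hid _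
      have h3 : fderiv ℝ u (t • om) (t • om) = t * fderiv ℝ u (t • om) om := by
        rw [map_smul, smul_eq_mul]
      have h4 : t * fderiv ℝ u (t • om) om = u (t • om) := by rw [← h3, h2]
      rw [← h4]
      field_simp
      ring
    have hconst : ∀ y ∈ Set.Icc (1:ℝ) ‖x‖, s y = s 1 := by
      apply constant_of_derivWithin_zero
      · intro t ht
        have htpos : (0:ℝ) < t := lt_of_lt_of_le one_pos ht.1
        exact (hder t htpos.ne').differentiableAt.differentiableWithinAt
      · intro t ht
        have htpos : (0:ℝ) < t := lt_of_lt_of_le one_pos ht.1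
        exact ((hder t htpos.ne').hasDerivWithinAt).derivWithin
          (uniqueDiffOn_Icc h1 t (Set.Ico_subset_Icc_self ht))
    have h5 := hconst ‖x‖ (Set.mem_Icc.mpr ⟨hx, le_refl _⟩)
    rw [hs] at h5
    simp only [hxw, inv_one, one_smul, one_mul] at h5
    rw [← h5]
    field_simp

/-- **Model problem for the extension of the conical scale** (Lemma 1.4).
Fix `β₀ > 0` and constants `K k`. There exist `r₀ ≥ 2` and `b > 0`, depending only on `β₀`
and the `K k`, such that: if `u : ℝ² → ℝ` is smooth, solves
`Δu - (1/2)(⟨x, ∇u⟩ - u) = 0` on all of `ℝ²`, satisfies `|∇^k u(x)| ≤ K k (1+|x|)^{1-k}`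
for all `k` and `x`, and has `C³` norm at most `b` on `B_{r+2}(0)` for some `r ≥ r₀`, then
`u(x) = c(x/|x|)|x| + f(x)` for `|x| ≥ 1`, with
`sup |c| + sup |x||f(x)| ≤ β₀`. -/
theorem stmt_0 (β₀ : ℝ) (hβ₀ : 0 < β₀) (K : ℕ → ℝ) :
    ∃ r₀ b : ℝ, 2 ≤ r₀ ∧ 0 < b ∧
      ∀ u : EuclideanSpace ℝ (Fin 2) → ℝ, ContDiff ℝ ∞ u →
        (∀ x : EuclideanSpace ℝ (Fin 2),
          (∑ i : Fin 2,
              iteratedFDeriv ℝ 2 u x (fun _ => EuclideanSpace.single i (1 : ℝ)))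
            - (1 / 2) * ((inner ℝ x (gradient u x) : ℝ) - u x) = 0) →
        (∀ (k : ℕ) (x : EuclideanSpace ℝ (Fin 2)),
          ‖iteratedFDeriv ℝ k u x‖ ≤ K k * (1 + ‖x‖) ^ ((1 : ℝ) - k)) →
        ∀ r : ℝ, r₀ ≤ r →
          (∀ x ∈ ball (0 : EuclideanSpace ℝ (Fin 2)) (r + 2),
            ∑ j ∈ Finset.range 4, ‖iteratedFDeriv ℝ j u x‖ ≤ b) →
          ∃ c f : EuclideanSpace ℝ (Fin 2) → ℝ,
            ContinuousOn c (sphere (0 : EuclideanSpace ℝ (Fin 2)) 1) ∧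
            (∀ x : EuclideanSpace ℝ (Fin 2), 1 ≤ ‖x‖ →
              u x = c (‖x‖⁻¹ • x) * ‖x‖ + f x) ∧
            (∀ w : EuclideanSpace ℝ (Fin 2), ‖w‖ = 1 →
              ∀ x : EuclideanSpace ℝ (Fin 2), 1 ≤ ‖x‖ →
                |c w| + ‖x‖ * |f x| ≤ β₀) := by
  refine ⟨2, β₀, le_refl _, hβ₀, ?_⟩
  intro u hu hpde hK r hr hb
  have hu1 : ContDiff ℝ ∞ (fderiv ℝ u) := hu.fderiv_right (by simp)
  have hgradinner : ∀ x : E2, (inner ℝ x (gradient u x) : ℝ) = fderiv ℝ u x x := by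
    intro x
    rw [real_inner_comm]
    exact InnerProductSpace.toDual_symm_apply
  have hpde' : ∀ x : E2, (∑ i : Fin 2, fderiv ℝ (fderiv ℝ u) x (ee i) (ee i))
      = (1/2)*(fderiv ℝ u x x - u x) := by
    intro x
    have h := hpde x
    rw [sub_eq_zero] at h
    rw [← hgradinner x, ← h]
    exact Finset.sum_congr rfl fun i _ => by rw [iteratedFDeriv_two_apply]; rfl
  -- decay of the "Laplacian" v
  have hpow : ∀ x : E2, (1 + ‖x‖) ^ ((1:ℝ) - (2:ℕ)) = (1 + ‖x‖)⁻¹ := by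
    intro x
    rw [show ((1:ℝ) - ((2:ℕ):ℝ)) = (-1 : ℝ) by norm_num]
    rw [Real.rpow_neg_one]
  have hdecv : ∀ x : E2, |(1/2)*(fderiv ℝ u x x - u x)| ≤ (2 * K 2) * (1 + ‖x‖)⁻¹ := by
    intro x
    rw [← hpde' x]
    have hbound : ∀ i : Fin 2, |fderiv ℝ (fderiv ℝ u) x (ee i) (ee i)| ≤ K 2 * (1 + ‖x‖)⁻¹ := by
      intro i
      have h1 : fderiv ℝ (fderiv ℝ u) x (ee i) (ee i)
          = iteratedFDeriv ℝ 2 u x (fun _ => ee i) := by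
        rw [iteratedFDeriv_two_apply]
      rw [h1]
      have h2 : |iteratedFDeriv ℝ 2 u x (fun _ => ee i)| ≤ ‖iteratedFDeriv ℝ 2 u x‖ := by
        have h3 := (iteratedFDeriv ℝ 2 u x).le_opNorm (fun _ => ee i)
        rw [Real.norm_eq_abs] at h3
        simpa [norm_ee] using h3
      have h4 := hK 2 x
      rw [hpow x] at h4
      exact le_trans h2 h4
    calc |∑ i : Fin 2, fderiv ℝ (fderiv ℝ u) x (ee i) (ee i)|
        ≤ ∑ i : Fin 2, |fderiv ℝ (fderiv ℝ u) x (ee i) (ee i)| :=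
          Finset.abs_sum_le_sum_abs _ _
      _ ≤ ∑ _i : Fin 2, K 2 * (1 + ‖x‖)⁻¹ := Finset.sum_le_sum fun i _ => hbound i
      _ = (2 * K 2) * (1 + ‖x‖)⁻¹ := by simp [Fin.sum_univ_two]; ring
  -- smoothness of v
  have hv : ContDiff ℝ ∞ (fun z : E2 => (1/2)*(fderiv ℝ u z z - u z)) :=
    ContDiff.mul contDiff_const ((hu1.clm_apply contDiff_id).sub hu)
  have heqv := heq_v u hu hpde'
  have hle1 : ∀ x : E2, (1/2)*(fderiv ℝ u x x - u x) ≤ 0 :=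
    maxprin _ hv (2 * K 2) heqv (fun x => le_trans (le_abs_self _) (hdecv x))
  -- the negative
  have heqvneg : ∀ x : E2, ∑ j : Fin 2,
      fderiv ℝ (fun y => fderiv ℝ (fun z => -((1/2)*(fderiv ℝ u z z - u z))) y (ee j)) x (ee j)
      = (1/2)*(fderiv ℝ (fun z => -((1/2)*(fderiv ℝ u z z - u z))) x x
          + -((1/2)*(fderiv ℝ u x x - u x))) := by
    intro x
    have hneg1 : ∀ y : E2, fderiv ℝ (fun z => -((1/2)*(fderiv ℝ u z z - u z))) y
        = -(fderiv ℝ (fun z => (1/2)*(fderiv ℝ u z z - u z)) y) := fun y => fderiv_neg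
    have hfun : ∀ j : Fin 2, (fun y => fderiv ℝ (fun z => -((1/2)*(fderiv ℝ u z z - u z))) y (ee j))
        = (fun y => -(fderiv ℝ (fun z => (1/2)*(fderiv ℝ u z z - u z)) y (ee j))) := by
      intro j
      funext y
      rw [hneg1 y]
      simp
    have hterm : ∀ j : Fin 2,
        fderiv ℝ (fun y => fderiv ℝ (fun z => -((1/2)*(fderiv ℝ u z z - u z))) y (ee j)) x (ee j)
        = -(fderiv ℝ (fun y => fderiv ℝ (fun z => (1/2)*(fderiv ℝ u z z - u z)) y (ee j)) x (ee j)) := by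
      intro j
      rw [hfun j, fderiv_fun_neg]
      simp
    rw [Finset.sum_congr rfl fun j _ => hterm j, hneg1 x]
    simp only [ContinuousLinearMap.neg_apply]
    rw [Finset.sum_neg_distrib, heqv x]
    ring
  have hvneg : ContDiff ℝ ∞ (fun z : E2 => -((1/2)*(fderiv ℝ u z z - u z))) := hv.neg
  have hle2 : ∀ x : E2, -((1/2)*(fderiv ℝ u x x - u x)) ≤ 0 :=
    maxprin _ hvneg (2 * K 2) heqvneg (fun x => le_trans (neg_le_abs _) (hdecv x))
  have hid : ∀ x : E2, fderiv ℝ u x x = u x := by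
    intro x
    have h1 := hle1 x
    have h2 := hle2 x
    have : (1/2)*(fderiv ℝ u x x - u x) = 0 := le_antisymm h1 (by linarith)
    linarith
  -- conclusion
  refine ⟨u, fun _ => 0, hu.continuous.continuousOn, ?_, ?_⟩
  · intro x hx
    simpa using homog u hu hid x hx
  · intro w hw x hx
    simp only [abs_zero, mul_zero, add_zero]
    have hmem : w ∈ ball (0 : E2) (r + 2) := by
      rw [mem_ball_zero_iff, hw]
      linarith
    have h := hb w hmem
    have h0 : |u w| = ‖iteratedFDeriv ℝ 0 u w‖ := by
      rw [norm_iteratedFDeriv_zero, Real.norm_eq_abs]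
    have h1 : ‖iteratedFDeriv ℝ 0 u w‖ ≤ ∑ j ∈ Finset.range 4, ‖iteratedFDeriv ℝ j u w‖ :=
      Finset.single_le_sum (f := fun j => ‖iteratedFDeriv ℝ j u w‖)
        (fun j _ => norm_nonneg _) (by simp)
    rw [h0]
    linarith
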